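/- For any state formula φ in the syntactic obligation fragment such that λ(φ) = * (i.e., φ is a Boolean combination of atomic propositions possibly with X operators, containing no other temporal operators), the state φ belongs to a trivial SCC of the automaton D_ι; that is, φ cannot lie on any cycle of the transition relation tr. -/

import Mathlib

/-- LTL formulas over atomic propositions `P`. -/
inductive LTL (P : Type) : Type
  | tt : LTL P
  | ff : LTL P
  | atom : P → LTL P
  | not : LTL P → LTL P
  | and : LTL P → LTL P → LTL P
  | or : LTL P → LTL P → LTL P
  | imp : LTL P → LTL P → LTL P
  | iff : LTL P → LTL P → LTL P
  | xor : LTL P → LTL P → LTL P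
  | next : LTL P → LTL P
  | until_ : LTL P → LTL P → LTL P
  | wuntil : LTL P → LTL P → LTL P
  | muntil : LTL P → LTL P → LTL P
  | release : LTL P → LTL P → LTL P
  | ev : LTL P → LTL P
  | always : LTL P → LTL P

namespace LTL

variable {P : Type}

/-- Negation with constant folding. -/
def mkNot : LTL P → LTL P
  | .tt => .ff
  | .ff => .tt
  | φ => .not φ

/-- Conjunction with constant folding. -/
def mkAnd : LTL P → LTL P → LTL P
  | .tt, β => β
  | .ff, _ => .ff
  | α, .tt => α
  | _, .ff => .ff
  | α, β => .and α β

/-- Disjunction with constant folding. -/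
def mkOr : LTL P → LTL P → LTL P
  | .tt, _ => .tt
  | .ff, β => β
  | _, .tt => .tt
  | α, .ff => α
  | α, β => .or α β

/-- Implication with constant folding. -/
def mkImp : LTL P → LTL P → LTL P
  | .ff, _ => .tt
  | .tt, β => β
  | _, .tt => .tt
  | α, .ff => mkNot α
  | α, β => .imp α β

/-- Equivalence with constant folding. -/
def mkIff : LTL P → LTL P → LTL P
  | .tt, β => β
  | .ff, β => mkNot β
  | α, .tt => α
  | α, .ff => mkNot α
  | α, β => .iff α β

/-- Exclusive or with constant folding. -/
def mkXor : LTL P → LTL P → LTL P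
  | .tt, β => mkNot β
  | .ff, β => β
  | α, .tt => mkNot α
  | α, .ff => α
  | α, β => .xor α β

/-- The syntactic successor (local unfolding) of a formula under an
assignment `v` of the atomic propositions. -/
def succ (v : P → Bool) : LTL P → LTL P
  | .tt => .tt
  | .ff => .ff
  | .atom p => if v p then .tt else .ff
  | .not φ => mkNot (succ v φ)
  | .and α β => mkAnd (succ v α) (succ v β)
  | .or α β => mkOr (succ v α) (succ v β)
  | .imp α β => mkImp (succ v α) (succ v β)
  | .iff α β => mkIff (succ v α) (succ v β)
  | .xor α β => mkXor (succ v α) (succ v β)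
  | .next φ => φ
  | .until_ α β => mkOr (succ v β) (mkAnd (succ v α) (.until_ α β))
  | .wuntil α β => mkOr (succ v β) (mkAnd (succ v α) (.wuntil α β))
  | .muntil α β => mkAnd (succ v β) (mkOr (succ v α) (.muntil α β))
  | .release α β => mkAnd (succ v β) (mkOr (succ v α) (.release α β))
  | .ev φ => mkOr (succ v φ) (.ev φ)
  | .always φ => mkAnd (succ v φ) (.always φ)

/-- Boolean evaluation of a formula where every maximal temporal subformula
(and every atomic proposition) is treated as an opaque Boolean variable,
interpreted by `ν`. -/
def evalB (ν : LTL P → Prop) : LTL P → Prop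
  | .tt => True
  | .ff => False
  | .not φ => ¬ evalB ν φ
  | .and α β => evalB ν α ∧ evalB ν β
  | .or α β => evalB ν α ∨ evalB ν β
  | .imp α β => evalB ν α → evalB ν β
  | .iff α β => evalB ν α ↔ evalB ν β
  | .xor α β => ¬ (evalB ν α ↔ evalB ν β)
  | φ => ν φ

/-- Propositional equivalence: the Boolean abstractions (with maximal
temporal subformulas replaced by variables) are logically equivalent. -/
def PropEquiv (α β : LTL P) : Prop := ∀ ν : LTL P → Prop, evalB ν α ↔ evalB ν β

/-! Three-valued acceptance values `some true = ⊤`, `some false = ⊥`,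
`none = *` (wildcard), with the wildcard-absorption tables of the paper. -/

def obNot : Option Bool → Option Bool
  | none => none
  | some b => some (!b)

def obAnd : Option Bool → Option Bool → Option Bool
  | some a, some b => some (a && b)
  | some a, none => some a
  | none, some b => some b
  | none, none => none

def obOr : Option Bool → Option Bool → Option Bool
  | some a, some b => some (a || b)
  | some a, none => some a
  | none, some b => some b
  | none, none => none

def obXor : Option Bool → Option Bool → Option Bool
  | some a, some b => some (a != b)
  | some _, none => some true
  | none, some _ => some true
  | none, none => none

def obIff : Option Bool → Option Bool → Option Bool
  | some a, some b => some (a == b)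
  | some _, none => some true
  | none, some _ => some true
  | none, none => none

def obImp : Option Bool → Option Bool → Option Bool
  | some a, some b => some (!a || b)
  | some true, none => some false
  | some false, none => some true
  | none, some b => some b
  | none, none => none

/-- The acceptance function λ : strong operators (F, U, M) are rejecting (⊥),
weak operators (G, W, R) are accepting (⊤), atoms are wildcards (*),
Boolean connectives are combined with wildcard absorption. -/
def lam : LTL P → Option Bool
  | .tt => some true
  | .ff => some false
  | .atom _ => none
  | .not φ => obNot (lam φ)
  | .and α β => obAnd (lam α) (lam β)
  | .or α β => obOr (lam α) (lam β)
  | .imp α β => obImp (lam α) (lam β)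
  | .iff α β => obIff (lam α) (lam β)
  | .xor α β => obXor (lam α) (lam β)
  | .next φ => lam φ
  | .until_ _ _ => some false
  | .muntil _ _ => some false
  | .ev _ => some false
  | .wuntil _ _ => some true
  | .release _ _ => some true
  | .always _ => some true

def IsConst : LTL P → Prop
  | .tt => True
  | .ff => True
  | _ => False

/-- `tt` and `ff` never occur as proper subformulas. -/
def NoConst : LTL P → Prop
  | .not φ => ¬ IsConst φ ∧ NoConst φ
  | .and α β => (¬ IsConst α ∧ NoConst α) ∧ (¬ IsConst β ∧ NoConst β)
  | .or α β => (¬ IsConst α ∧ NoConst α) ∧ (¬ IsConst β ∧ NoConst β)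
  | .imp α β => (¬ IsConst α ∧ NoConst α) ∧ (¬ IsConst β ∧ NoConst β)
  | .iff α β => (¬ IsConst α ∧ NoConst α) ∧ (¬ IsConst β ∧ NoConst β)
  | .xor α β => (¬ IsConst α ∧ NoConst α) ∧ (¬ IsConst β ∧ NoConst β)
  | .next φ => ¬ IsConst φ ∧ NoConst φ
  | .until_ α β => (¬ IsConst α ∧ NoConst α) ∧ (¬ IsConst β ∧ NoConst β)
  | .wuntil α β => (¬ IsConst α ∧ NoConst α) ∧ (¬ IsConst β ∧ NoConst β)
  | .muntil α β => (¬ IsConst α ∧ NoConst α) ∧ (¬ IsConst β ∧ NoConst β)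
  | .release α β => (¬ IsConst α ∧ NoConst α) ∧ (¬ IsConst β ∧ NoConst β)
  | .ev φ => ¬ IsConst φ ∧ NoConst φ
  | .always φ => ¬ IsConst φ ∧ NoConst φ
  | _ => True

/-- The "bottom" class `φ_B`: Boolean combinations of atomic propositions,
constants, possibly with `X`. -/
inductive IsB : LTL P → Prop
  | tt : IsB .tt
  | ff : IsB .ff
  | atom (p : P) : IsB (.atom p)
  | not {φ} : IsB φ → IsB (.not φ)
  | and {α β} : IsB α → IsB β → IsB (.and α β)
  | or {α β} : IsB α → IsB β → IsB (.or α β)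
  | imp {α β} : IsB α → IsB β → IsB (.imp α β)
  | iff {α β} : IsB α → IsB β → IsB (.iff α β)
  | xor {α β} : IsB α → IsB β → IsB (.xor α β)
  | next {φ} : IsB φ → IsB (.next φ)

mutual
/-- Syntactic guarantee formulas `φ_G`. -/
inductive IsG : LTL P → Prop
  | ofB {φ} : IsB φ → IsG φ
  | notS {φ} : IsS φ → IsG (.not φ)
  | and {α β} : IsG α → IsG β → IsG (.and α β)
  | or {α β} : IsG α → IsG β → IsG (.or α β)
  | impS {α β} : IsS α → IsG β → IsG (.imp α β)
  | next {φ} : IsG φ → IsG (.next φ)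
  | ev {φ} : IsG φ → IsG (.ev φ)
  | until_ {α β} : IsG α → IsG β → IsG (.until_ α β)
  | muntil {α β} : IsG α → IsG β → IsG (.muntil α β)

/-- Syntactic safety formulas `φ_S`. -/
inductive IsS : LTL P → Prop
  | ofB {φ} : IsB φ → IsS φ
  | notG {φ} : IsG φ → IsS (.not φ)
  | and {α β} : IsS α → IsS β → IsS (.and α β)
  | or {α β} : IsS α → IsS β → IsS (.or α β)
  | impG {α β} : IsG α → IsS β → IsS (.imp α β)
  | next {φ} : IsS φ → IsS (.next φ)
  | always {φ} : IsS φ → IsS (.always φ)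
  | release {α β} : IsS α → IsS β → IsS (.release α β)
  | wuntil {α β} : IsS α → IsS β → IsS (.wuntil α β)
end

/-- Syntactic obligation formulas `φ_O`. -/
inductive IsO : LTL P → Prop
  | ofG {φ} : IsG φ → IsO φ
  | ofS {φ} : IsS φ → IsO φ
  | not {φ} : IsO φ → IsO (.not φ)
  | and {α β} : IsO α → IsO β → IsO (.and α β)
  | or {α β} : IsO α → IsO β → IsO (.or α β)
  | imp {α β} : IsO α → IsO β → IsO (.imp α β)
  | iff {α β} : IsO α → IsO β → IsO (.iff α β)
  | xor {α β} : IsO α → IsO β → IsO (.xor α β)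
  | next {φ} : IsO φ → IsO (.next φ)
  | untilG {α β} : IsO α → IsG β → IsO (.until_ α β)
  | releaseS {α β} : IsO α → IsS β → IsO (.release α β)
  | wuntilO {α β} : IsS α → IsO β → IsO (.wuntil α β)
  | muntilO {α β} : IsG α → IsO β → IsO (.muntil α β)

/-- Raw successor relation (no quotienting). -/
def StepRaw (α β : LTL P) : Prop := ∃ v : P → Bool, succ v α = β

/-- Successor relation of the construction: the raw successor is replaced by
the representative `rep` of its propositional-equivalence class. -/
def StepRep (rep : LTL P → LTL P) (α β : LTL P) : Prop :=
  ∃ v : P → Bool, rep (succ v α) = β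

/-- Hypotheses making `rep` a legitimate choice of representatives of
propositional-equivalence classes for the automaton `D_ι`: `rep` picks a
propositionally equivalent formula, constantly on each class, the constants
are canonical, and every state of `D_ι` is (except for `ι` and the constants)
a formula actually produced by the unfolding `succ` from `ι`. -/
def GoodRep (rep : LTL P → LTL P) (ι : LTL P) : Prop :=
  (∀ α, PropEquiv (rep α) α) ∧
  (∀ α β, PropEquiv α β → rep α = rep β) ∧
  (rep .tt = .tt) ∧ (rep .ff = .ff) ∧
  (∀ φ, Relation.ReflTransGen (StepRep rep) ι φ →
      φ = ι ∨ φ = .tt ∨ φ = .ff ∨ Relation.ReflTransGen StepRaw ι φ)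

/-- Shift of an infinite word. -/
def shiftw (w : ℕ → (P → Prop)) (k : ℕ) : ℕ → (P → Prop) := fun n => w (n + k)

/-- Standard LTL semantics over infinite words. -/
def Sat : (ℕ → (P → Prop)) → LTL P → Prop
  | _, .tt => True
  | _, .ff => False
  | w, .atom p => w 0 p
  | w, .not φ => ¬ Sat w φ
  | w, .and α β => Sat w α ∧ Sat w β
  | w, .or α β => Sat w α ∨ Sat w β
  | w, .imp α β => Sat w α → Sat w β
  | w, .iff α β => Sat w α ↔ Sat w β
  | w, .xor α β => ¬ (Sat w α ↔ Sat w β)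
  | w, .next φ => Sat (shiftw w 1) φ
  | w, .until_ α β => ∃ i, Sat (shiftw w i) β ∧ ∀ j < i, Sat (shiftw w j) α
  | w, .wuntil α β =>
      (∃ i, Sat (shiftw w i) β ∧ ∀ j < i, Sat (shiftw w j) α) ∨ ∀ i, Sat (shiftw w i) α
  | w, .muntil α β =>
      ∃ i, (Sat (shiftw w i) α ∧ Sat (shiftw w i) β) ∧ ∀ j < i, Sat (shiftw w j) β
  | w, .release α β => ∀ i, Sat (shiftw w i) β ∨ ∃ j < i, Sat (shiftw w j) α
  | w, .ev φ => ∃ i, Sat (shiftw w i) φ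
  | w, .always φ => ∀ i, Sat (shiftw w i) φ

/-- X-nesting depth. -/
def xdepth : LTL P → ℕ
  | .not φ => xdepth φ
  | .and α β => max (xdepth α) (xdepth β)
  | .or α β => max (xdepth α) (xdepth β)
  | .imp α β => max (xdepth α) (xdepth β)
  | .iff α β => max (xdepth α) (xdepth β)
  | .xor α β => max (xdepth α) (xdepth β)
  | .next φ => xdepth φ + 1
  | _ => 0

/-- Size of a formula. -/
def size : LTL P → ℕ
  | .tt => 1
  | .ff => 1
  | .atom _ => 1
  | .not φ => size φ + 1
  | .and α β => size α + size β + 1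
  | .or α β => size α + size β + 1
  | .imp α β => size α + size β + 1
  | .iff α β => size α + size β + 1
  | .xor α β => size α + size β + 1
  | .next φ => size φ + 1
  | .until_ α β => size α + size β + 1
  | .wuntil α β => size α + size β + 1
  | .muntil α β => size α + size β + 1
  | .release α β => size α + size β + 1
  | .ev φ => size φ + 1
  | .always φ => size φ + 1

/-- Iterated application of the syntactic successor. -/
def iterSucc (vs : ℕ → P → Bool) (φ : LTL P) : ℕ → LTL P
  | 0 => φ
  | n + 1 => succ (vs n) (iterSucc vs φ n)

/-- The run of the automaton `D_ι` (with representative function `rep`) on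
the infinite word `w`. -/
def runRep (rep : LTL P → LTL P) (ι : LTL P) (w : ℕ → P → Bool) : ℕ → LTL P
  | 0 => ι
  | n + 1 => rep (succ (w n) (runRep rep ι w n))

end LTL

namespace LTLAux
open LTL

variable {P : Type}

/-- Pure Boolean formulas over atoms, possibly with X; no constants, no other temporals. -/
inductive PureF : LTL P → Prop
  | atom (p : P) : PureF (.atom p)
  | not {φ} : PureF φ → PureF (.not φ)
  | and {α β} : PureF α → PureF β → PureF (.and α β)
  | or {α β} : PureF α → PureF β → PureF (.or α β)
  | imp {α β} : PureF α → PureF β → PureF (.imp α β)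
  | iff {α β} : PureF α → PureF β → PureF (.iff α β)
  | xor {α β} : PureF α → PureF β → PureF (.xor α β)
  | next {φ} : PureF φ → PureF (.next φ)

@[simp] lemma obNot_eq_none {x : Option Bool} : obNot x = none ↔ x = none := by
  cases x <;> simp [obNot]
@[simp] lemma obAnd_eq_none {x y : Option Bool} : obAnd x y = none ↔ x = none ∧ y = none := by
  cases x <;> cases y <;> simp [obAnd]
@[simp] lemma obOr_eq_none {x y : Option Bool} : obOr x y = none ↔ x = none ∧ y = none := by
  cases x <;> cases y <;> simp [obOr]
@[simp] lemma obImp_eq_none {x y : Option Bool} : obImp x y = none ↔ x = none ∧ y = none := by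
  cases x <;> cases y <;> simp [obImp] <;> rename_i b <;> cases b <;> simp [obImp]
@[simp] lemma obIff_eq_none {x y : Option Bool} : obIff x y = none ↔ x = none ∧ y = none := by
  cases x <;> cases y <;> simp [obIff]
@[simp] lemma obXor_eq_none {x y : Option Bool} : obXor x y = none ↔ x = none ∧ y = none := by
  cases x <;> cases y <;> simp [obXor]

lemma lam_none_pure : ∀ {φ : LTL P}, lam φ = none → PureF φ := by
  intro φ
  induction φ <;> intro h <;>
    simp only [lam, obNot_eq_none, obAnd_eq_none, obOr_eq_none, obImp_eq_none,
      obIff_eq_none, obXor_eq_none] at h <;>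
    try (cases h; done)
  case atom p => exact .atom p
  case not φ ih => exact .not (ih h)
  case and α β ihα ihβ => exact .and (ihα h.1) (ihβ h.2)
  case or α β ihα ihβ => exact .or (ihα h.1) (ihβ h.2)
  case imp α β ihα ihβ => exact .imp (ihα h.1) (ihβ h.2)
  case iff α β ihα ihβ => exact .iff (ihα h.1) (ihβ h.2)
  case xor α β ihα ihβ => exact .xor (ihα h.1) (ihβ h.2)
  case next φ ih => exact .next (ih h)

/-! mk-operation computation lemmas. -/

lemma mkNot_pure {α : LTL P} (ha : PureF α) : mkNot α = .not α := by cases ha <;> rfl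
lemma mkAnd_pure {α β : LTL P} (ha : PureF α) (hb : PureF β) : mkAnd α β = .and α β := by
  cases ha <;> cases hb <;> rfl
lemma mkOr_pure {α β : LTL P} (ha : PureF α) (hb : PureF β) : mkOr α β = .or α β := by
  cases ha <;> cases hb <;> rfl
lemma mkImp_pure {α β : LTL P} (ha : PureF α) (hb : PureF β) : mkImp α β = .imp α β := by
  cases ha <;> cases hb <;> rfl
lemma mkIff_pure {α β : LTL P} (ha : PureF α) (hb : PureF β) : mkIff α β = .iff α β := by
  cases ha <;> cases hb <;> rfl
lemma mkXor_pure {α β : LTL P} (ha : PureF α) (hb : PureF β) : mkXor α β = .xor α β := by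
  cases ha <;> cases hb <;> rfl

lemma mkAnd_tt_left {β : LTL P} : mkAnd .tt β = β := by cases β <;> rfl
lemma mkAnd_ff_left {β : LTL P} : mkAnd .ff β = .ff := by cases β <;> rfl
lemma mkOr_tt_left {β : LTL P} : mkOr .tt β = .tt := by cases β <;> rfl
lemma mkOr_ff_left {β : LTL P} : mkOr .ff β = β := by cases β <;> rfl
lemma mkImp_tt_left {β : LTL P} : mkImp .tt β = β := by cases β <;> rfl
lemma mkImp_ff_left {β : LTL P} : mkImp .ff β = .tt := by cases β <;> rfl
lemma mkIff_tt_left {β : LTL P} : mkIff .tt β = β := by cases β <;> rfl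
lemma mkIff_ff_left {β : LTL P} : mkIff .ff β = mkNot β := by cases β <;> rfl
lemma mkXor_tt_left {β : LTL P} : mkXor .tt β = mkNot β := by cases β <;> rfl
lemma mkXor_ff_left {β : LTL P} : mkXor .ff β = β := by cases β <;> rfl

lemma mkAnd_tt_right {α : LTL P} (ha : PureF α) : mkAnd α .tt = α := by cases ha <;> rfl
lemma mkAnd_ff_right {α : LTL P} (ha : PureF α) : mkAnd α .ff = .ff := by cases ha <;> rfl
lemma mkOr_tt_right {α : LTL P} (ha : PureF α) : mkOr α .tt = .tt := by cases ha <;> rfl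
lemma mkOr_ff_right {α : LTL P} (ha : PureF α) : mkOr α .ff = α := by cases ha <;> rfl
lemma mkImp_tt_right {α : LTL P} (ha : PureF α) : mkImp α .tt = .tt := by cases ha <;> rfl
lemma mkImp_ff_right {α : LTL P} (ha : PureF α) : mkImp α .ff = mkNot α := by cases ha <;> rfl
lemma mkIff_tt_right {α : LTL P} (ha : PureF α) : mkIff α .tt = α := by cases ha <;> rfl
lemma mkIff_ff_right {α : LTL P} (ha : PureF α) : mkIff α .ff = mkNot α := by cases ha <;> rfl
lemma mkXor_tt_right {α : LTL P} (ha : PureF α) : mkXor α .tt = mkNot α := by cases ha <;> rfl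
lemma mkXor_ff_right {α : LTL P} (ha : PureF α) : mkXor α .ff = α := by cases ha <;> rfl

/-- A formula is "good at level n": a constant, or pure with xdepth below `n`. -/
def Good (n : ℕ) (ψ : LTL P) : Prop :=
  ψ = .tt ∨ ψ = .ff ∨ (PureF ψ ∧ xdepth ψ < n)

lemma Good.mono {n m : ℕ} {ψ : LTL P} (h : Good n ψ) (hnm : n ≤ m) : Good m ψ := by
  rcases h with h | h | ⟨h1, h2⟩
  · exact Or.inl h
  · exact Or.inr (Or.inl h)
  · exact Or.inr (Or.inr ⟨h1, lt_of_lt_of_le h2 hnm⟩)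

lemma good_mkNot {n : ℕ} {α : LTL P} (h : Good n α) : Good n (mkNot α) := by
  rcases h with rfl | rfl | ⟨h1, h2⟩
  · exact Or.inr (Or.inl rfl)
  · exact Or.inl rfl
  · rw [mkNot_pure h1]
    exact Or.inr (Or.inr ⟨.not h1, by simpa [xdepth] using h2⟩)

lemma good_mkAnd {n : ℕ} {α β : LTL P} (ha : Good n α) (hb : Good n β) :
    Good n (mkAnd α β) := by
  rcases ha with rfl | rfl | ⟨ha1, ha2⟩
  · rw [mkAnd_tt_left]; exact hb
  · rw [mkAnd_ff_left]; exact Or.inr (Or.inl rfl)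
  rcases hb with rfl | rfl | ⟨hb1, hb2⟩
  · rw [mkAnd_tt_right ha1]; exact Or.inr (Or.inr ⟨ha1, ha2⟩)
  · rw [mkAnd_ff_right ha1]; exact Or.inr (Or.inl rfl)
  · rw [mkAnd_pure ha1 hb1]
    exact Or.inr (Or.inr ⟨.and ha1 hb1, by simp [xdepth]; omega⟩)

lemma good_mkOr {n : ℕ} {α β : LTL P} (ha : Good n α) (hb : Good n β) :
    Good n (mkOr α β) := by
  rcases ha with rfl | rfl | ⟨ha1, ha2⟩
  · rw [mkOr_tt_left]; exact Or.inl rfl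
  · rw [mkOr_ff_left]; exact hb
  rcases hb with rfl | rfl | ⟨hb1, hb2⟩
  · rw [mkOr_tt_right ha1]; exact Or.inl rfl
  · rw [mkOr_ff_right ha1]; exact Or.inr (Or.inr ⟨ha1, ha2⟩)
  · rw [mkOr_pure ha1 hb1]
    exact Or.inr (Or.inr ⟨.or ha1 hb1, by simp [xdepth]; omega⟩)

lemma good_mkImp {n : ℕ} {α β : LTL P} (ha : Good n α) (hb : Good n β) :
    Good n (mkImp α β) := by
  rcases ha with rfl | rfl | ⟨ha1, ha2⟩
  · rw [mkImp_tt_left]; exact hb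
  · rw [mkImp_ff_left]; exact Or.inl rfl
  rcases hb with rfl | rfl | ⟨hb1, hb2⟩
  · rw [mkImp_tt_right ha1]; exact Or.inl rfl
  · rw [mkImp_ff_right ha1]; exact good_mkNot (Or.inr (Or.inr ⟨ha1, ha2⟩))
  · rw [mkImp_pure ha1 hb1]
    exact Or.inr (Or.inr ⟨.imp ha1 hb1, by simp [xdepth]; omega⟩)

lemma good_mkIff {n : ℕ} {α β : LTL P} (ha : Good n α) (hb : Good n β) :
    Good n (mkIff α β) := by
  rcases ha with rfl | rfl | ⟨ha1, ha2⟩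
  · rw [mkIff_tt_left]; exact hb
  · rw [mkIff_ff_left]; exact good_mkNot hb
  rcases hb with rfl | rfl | ⟨hb1, hb2⟩
  · rw [mkIff_tt_right ha1]; exact Or.inr (Or.inr ⟨ha1, ha2⟩)
  · rw [mkIff_ff_right ha1]; exact good_mkNot (Or.inr (Or.inr ⟨ha1, ha2⟩))
  · rw [mkIff_pure ha1 hb1]
    exact Or.inr (Or.inr ⟨.iff ha1 hb1, by simp [xdepth]; omega⟩)

lemma good_mkXor {n : ℕ} {α β : LTL P} (ha : Good n α) (hb : Good n β) :
    Good n (mkXor α β) := by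
  rcases ha with rfl | rfl | ⟨ha1, ha2⟩
  · rw [mkXor_tt_left]; exact good_mkNot hb
  · rw [mkXor_ff_left]; exact hb
  rcases hb with rfl | rfl | ⟨hb1, hb2⟩
  · rw [mkXor_tt_right ha1]; exact good_mkNot (Or.inr (Or.inr ⟨ha1, ha2⟩))
  · rw [mkXor_ff_right ha1]; exact Or.inr (Or.inr ⟨ha1, ha2⟩)
  · rw [mkXor_pure ha1 hb1]
    exact Or.inr (Or.inr ⟨.xor ha1 hb1, by simp [xdepth]; omega⟩)

lemma succ_good {φ : LTL P} (h : PureF φ) (v : P → Bool) : Good (xdepth φ) (succ v φ) := by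
  induction h with
  | atom p =>
      simp only [succ]
      by_cases hv : v p
      · rw [if_pos hv]; exact Or.inl rfl
      · rw [if_neg hv]; exact Or.inr (Or.inl rfl)
  | not hφ ih =>
      simpa [succ, xdepth] using good_mkNot ih
  | and hα hβ ihα ihβ =>
      simpa [succ, xdepth] using
        good_mkAnd (ihα.mono (le_max_left _ _)) (ihβ.mono (le_max_right _ _))
  | or hα hβ ihα ihβ =>
      simpa [succ, xdepth] using
        good_mkOr (ihα.mono (le_max_left _ _)) (ihβ.mono (le_max_right _ _))
  | imp hα hβ ihα ihβ =>
      simpa [succ, xdepth] using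
        good_mkImp (ihα.mono (le_max_left _ _)) (ihβ.mono (le_max_right _ _))
  | iff hα hβ ihα ihβ =>
      simpa [succ, xdepth] using
        good_mkIff (ihα.mono (le_max_left _ _)) (ihβ.mono (le_max_right _ _))
  | xor hα hβ ihα ihβ =>
      simpa [succ, xdepth] using
        good_mkXor (ihα.mono (le_max_left _ _)) (ihβ.mono (le_max_right _ _))
  | next hφ ih =>
      exact Or.inr (Or.inr ⟨hφ, by simp [succ, xdepth]⟩)

/-- Iterated `succ` along a list of assignments. -/
def sfold (vs : List (P → Bool)) (φ : LTL P) : LTL P :=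
  vs.foldl (fun ψ v => succ v ψ) φ

@[simp] lemma sfold_nil (φ : LTL P) : sfold ([] : List (P → Bool)) φ = φ := rfl
@[simp] lemma sfold_cons (v : P → Bool) (vs : List (P → Bool)) (φ : LTL P) :
    sfold (v :: vs) φ = sfold vs (succ v φ) := rfl
lemma sfold_append (vs ws : List (P → Bool)) (φ : LTL P) :
    sfold (vs ++ ws) φ = sfold ws (sfold vs φ) := by
  simp [sfold, List.foldl_append]

@[simp] lemma sfold_tt (vs : List (P → Bool)) : sfold vs (.tt : LTL P) = .tt := by
  induction vs with
  | nil => rfl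
  | cons v vs ih => simpa [succ] using ih
@[simp] lemma sfold_ff (vs : List (P → Bool)) : sfold vs (.ff : LTL P) = .ff := by
  induction vs with
  | nil => rfl
  | cons v vs ih => simpa [succ] using ih

lemma sfold_const : ∀ (vs : List (P → Bool)) {φ : LTL P}, PureF φ →
    xdepth φ < vs.length → sfold vs φ = .tt ∨ sfold vs φ = .ff := by
  intro vs
  induction vs with
  | nil => intro φ _ hlen; simp at hlen
  | cons v rest ih =>
      intro φ h hlen
      rcases succ_good h v with hc | hc | ⟨h1, h2⟩
      · rw [sfold_cons, hc, sfold_tt]; exact Or.inl rfl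
      · rw [sfold_cons, hc, sfold_ff]; exact Or.inr rfl
      · rw [sfold_cons]
        exact ih h1 (by simp only [List.length_cons] at hlen; omega)

/-! evalB compatibility with the mk-operations. -/

lemma evalB_mkNot (ν : LTL P → Prop) (α : LTL P) :
    evalB ν (mkNot α) ↔ ¬ evalB ν α := by
  cases α <;> simp [mkNot, evalB]

lemma evalB_mkAnd (ν : LTL P → Prop) (α β : LTL P) :
    evalB ν (mkAnd α β) ↔ (evalB ν α ∧ evalB ν β) := by
  cases α <;> cases β <;> simp [mkAnd, evalB]

lemma evalB_mkOr (ν : LTL P → Prop) (α β : LTL P) :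
    evalB ν (mkOr α β) ↔ (evalB ν α ∨ evalB ν β) := by
  cases α <;> cases β <;> simp [mkOr, evalB]

lemma evalB_mkImp (ν : LTL P → Prop) (α β : LTL P) :
    evalB ν (mkImp α β) ↔ (evalB ν α → evalB ν β) := by
  cases α <;> cases β <;> simp [mkImp, evalB, evalB_mkNot]

lemma evalB_mkIff (ν : LTL P → Prop) (α β : LTL P) :
    evalB ν (mkIff α β) ↔ (evalB ν α ↔ evalB ν β) := by
  cases α <;> cases β <;> simp [mkIff, evalB, evalB_mkNot] <;> tauto

lemma evalB_mkXor (ν : LTL P → Prop) (α β : LTL P) :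
    evalB ν (mkXor α β) ↔ ¬ (evalB ν α ↔ evalB ν β) := by
  cases α <;> cases β <;> simp [mkXor, evalB, evalB_mkNot] <;> tauto

/-- The key "bisimulation" property: `evalB` after one unfolding step is the
Boolean evaluation with leaves reinterpreted by their own unfoldings. -/
lemma evalB_succ (ν : LTL P → Prop) (v : P → Bool) :
    ∀ φ : LTL P, evalB ν (succ v φ) ↔ evalB (fun χ => evalB ν (succ v χ)) φ := by
  intro φ
  induction φ with
  | tt => exact Iff.rfl
  | ff => exact Iff.rfl
  | atom p => exact Iff.rfl
  | not φ ih => simp only [succ, evalB_mkNot, evalB]; rw [ih]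
  | and α β ihα ihβ => simp only [succ, evalB_mkAnd, evalB]; rw [ihα, ihβ]
  | or α β ihα ihβ => simp only [succ, evalB_mkOr, evalB]; rw [ihα, ihβ]
  | imp α β ihα ihβ => simp only [succ, evalB_mkImp, evalB]; rw [ihα, ihβ]
  | iff α β ihα ihβ => simp only [succ, evalB_mkIff, evalB]; rw [ihα, ihβ]
  | xor α β ihα ihβ => simp only [succ, evalB_mkXor, evalB]; rw [ihα, ihβ]
  | next φ ih => exact Iff.rfl
  | until_ α β _ _ => exact Iff.rfl
  | wuntil α β _ _ => exact Iff.rfl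
  | muntil α β _ _ => exact Iff.rfl
  | release α β _ _ => exact Iff.rfl
  | ev φ _ => exact Iff.rfl
  | always φ _ => exact Iff.rfl

lemma pe_refl (α : LTL P) : PropEquiv α α := fun _ => Iff.rfl
lemma pe_symm {α β : LTL P} (h : PropEquiv α β) : PropEquiv β α := fun ν => (h ν).symm
lemma pe_trans {α β γ : LTL P} (h1 : PropEquiv α β) (h2 : PropEquiv β γ) :
    PropEquiv α γ := fun ν => (h1 ν).trans (h2 ν)

lemma pe_succ {α β : LTL P} (h : PropEquiv α β) (v : P → Bool) :
    PropEquiv (succ v α) (succ v β) := by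
  intro ν
  rw [evalB_succ ν v α, evalB_succ ν v β]
  exact h _

lemma pe_sfold {α β : LTL P} (h : PropEquiv α β) (vs : List (P → Bool)) :
    PropEquiv (sfold vs α) (sfold vs β) := by
  induction vs generalizing α β with
  | nil => exact h
  | cons v vs ih => simpa using ih (pe_succ h v)

lemma reach_sfold {rep : LTL P → LTL P} (hrep1 : ∀ α, PropEquiv (rep α) α)
    {α β : LTL P} (h : Relation.ReflTransGen (StepRep rep) α β) :
    ∃ vs : List (P → Bool), PropEquiv β (sfold vs α) := by
  induction h with
  | refl => exact ⟨[], pe_refl _⟩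
  | tail hsteps hstep ih =>
      obtain ⟨vs, hvs⟩ := ih
      obtain ⟨v, rfl⟩ := hstep
      refine ⟨vs ++ [v], ?_⟩
      rw [sfold_append]
      exact pe_trans (hrep1 _) (by simpa using pe_succ hvs v)

lemma pump {φ : LTL P} {L : List (P → Bool)} (h : PropEquiv φ (sfold L φ))
    (hL : L ≠ []) : ∀ m : ℕ, ∃ L' : List (P → Bool),
      m ≤ L'.length ∧ PropEquiv φ (sfold L' φ) := by
  intro m
  induction m with
  | zero => exact ⟨L, Nat.zero_le _, h⟩
  | succ m ih =>
      obtain ⟨L', hlen, hq⟩ := ih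
      refine ⟨L' ++ L, ?_, ?_⟩
      · have : 1 ≤ L.length := List.length_pos_iff.mpr hL
        simp only [List.length_append]; omega
      · rw [sfold_append]
        exact pe_trans h (pe_sfold hq L)

end LTLAux

/-- a state `φ` of `D_ι` with `λ(φ) = *` (a Boolean combination of
atoms possibly with `X`, no other temporal operator) cannot lie on any cycle of
the transition relation `tr`, i.e. it belongs to a trivial SCC of `D_ι`. -/
theorem stmt0 {P : Type} (rep : LTL P → LTL P) (ι : LTL P)
    (hrep : LTL.GoodRep rep ι) (hι : LTL.IsO ι) (hnc : LTL.NoConst ι)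
    (φ : LTL P) (hstate : Relation.ReflTransGen (LTL.StepRep rep) ι φ)
    (hstar : LTL.lam φ = none) :
    ¬ Relation.TransGen (LTL.StepRep rep) φ φ := by
  intro hcyc
  obtain ⟨χ, hrtc, hstep⟩ := (Relation.TransGen.tail'_iff).mp hcyc
  obtain ⟨v, hv⟩ := hstep
  obtain ⟨hrep1, hrep2, hrep3, hrep4, -⟩ := hrep
  obtain ⟨vs, hvs⟩ := LTLAux.reach_sfold hrep1 hrtc
  have hpe : LTL.PropEquiv φ (LTL.succ v χ) := hv ▸ hrep1 (LTL.succ v χ)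
  have hφ : LTL.PropEquiv φ (LTLAux.sfold (vs ++ [v]) φ) := by
    rw [LTLAux.sfold_append]
    exact LTLAux.pe_trans hpe (by simpa using LTLAux.pe_succ hvs v)
  have hpure := LTLAux.lam_none_pure hstar
  obtain ⟨L', hlen, hq⟩ := LTLAux.pump hφ (by simp) (LTL.xdepth φ + 1)
  have hconst := LTLAux.sfold_const L' hpure (by omega)
  have hfin : φ = LTL.tt ∨ φ = LTL.ff := by
    rcases hconst with hc | hc
    · left
      have h1 : LTL.PropEquiv (LTL.succ v χ) LTL.tt :=
        LTLAux.pe_trans (LTLAux.pe_symm hpe) (hc ▸ hq)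
      rw [← hv, hrep2 _ _ h1, hrep3]
    · right
      have h1 : LTL.PropEquiv (LTL.succ v χ) LTL.ff :=
        LTLAux.pe_trans (LTLAux.pe_symm hpe) (hc ▸ hq)
      rw [← hv, hrep2 _ _ h1, hrep4]
  rcases hfin with rfl | rfl <;> simp [LTL.lam] at hstar
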